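/- Let g be a bounded measurable q-periodic function on ℝ with zero mean over one period, and let f ∈ W^{1,1}(0,H) (hence continuous on [0,H]) vanish at least at one point of [0,H]. Then for every ε > 0, |∫_0^H g(x/ε) f(x) dx| ≤ 2 ε q ‖g‖_{L∞(ℝ)} ‖f'‖_{L¹(0,H)}. -/

import Mathlib

open MeasureTheory Set Real


lemma bdd_integrableOn {g : ℝ → ℝ} (hm : Measurable g) {M : ℝ}
    (hb : ∀ x, |g x| ≤ M) (s : Set ℝ) (hs : volume s ≠ ⊤) :
    IntegrableOn g s := by
  refine Integrable.mono' (g := fun _ => M) (integrableOn_const hs) hm.aestronglyMeasurable ?_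
  exact Filter.Eventually.of_forall fun x => by simpa [Real.norm_eq_abs] using hb x

lemma bdd_intervalIntegrable {g : ℝ → ℝ} (hm : Measurable g) {M : ℝ}
    (hb : ∀ x, |g x| ≤ M) (a b : ℝ) :
    IntervalIntegrable g volume a b := by
  rw [intervalIntegrable_iff]
  have : volume (Set.uIoc a b) ≠ ⊤ := by rw [Set.uIoc]; exact measure_Ioc_lt_top.ne
  exact bdd_integrableOn hm hb _ this

lemma swapA (a b : ℝ) (hab : a ≤ b) (φ ψ : ℝ → ℝ)
    (hφ : IntegrableOn φ (Set.Ioc a b))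
    (hψ : IntegrableOn ψ (Set.Ioc a b)) :
    (∫ x in a..b, φ x * ∫ t in a..x, ψ t) = ∫ t in a..b, (∫ x in t..b, φ x) * ψ t := by
  set μ := volume.restrict (Set.Ioc a b) with hμ
  have hS : MeasurableSet {p : ℝ × ℝ | p.2 ≤ p.1} :=
    (isClosed_le continuous_snd continuous_fst).measurableSet
  set F : ℝ → ℝ → ℝ := fun x t =>
    Set.indicator {p : ℝ × ℝ | p.2 ≤ p.1} (fun p => φ p.1 * ψ p.2) (x, t) with hF
  have hFint : Integrable (Function.uncurry F) (μ.prod μ) := by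
    have h1 : Function.uncurry F
        = Set.indicator {p : ℝ × ℝ | p.2 ≤ p.1} (fun p => φ p.1 * ψ p.2) := rfl
    rw [h1]
    exact (Integrable.mul_prod hφ hψ).indicator hS
  have hL : ∀ x ∈ Set.Ioc a b, φ x * (∫ t in a..x, ψ t) = ∫ t, F x t ∂μ := by
    intro x hx
    have h1 : ∀ t, F x t = Set.indicator (Set.Iic x) (fun t => φ x * ψ t) t := by
      intro t
      by_cases h : t ≤ x <;> simp [hF, Set.indicator, h]
    simp_rw [h1]
    rw [MeasureTheory.integral_indicator measurableSet_Iic, hμ,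
      Measure.restrict_restrict measurableSet_Iic]
    have h2 : Set.Iic x ∩ Set.Ioc a b = Set.Ioc a x := by
      ext t; simp only [mem_inter_iff, mem_Iic, mem_Ioc]
      constructor
      · rintro ⟨h1, h2, h3⟩; exact ⟨h2, h1⟩
      · rintro ⟨h1, h2⟩; exact ⟨h2, h1, h2.trans hx.2⟩
    rw [h2, MeasureTheory.integral_const_mul, intervalIntegral.integral_of_le hx.1.le]
  have hR : ∀ t ∈ Set.Ioc a b, (∫ x, F x t ∂μ) = (∫ x in t..b, φ x) * ψ t := by
    intro t ht
    have h1 : ∀ x, F x t = Set.indicator (Set.Ici t) (fun x => φ x * ψ t) x := by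
      intro x
      by_cases h : t ≤ x <;> simp [hF, Set.indicator, h]
    simp_rw [h1]
    rw [MeasureTheory.integral_indicator measurableSet_Ici, hμ,
      Measure.restrict_restrict measurableSet_Ici]
    have h2 : Set.Ici t ∩ Set.Ioc a b = Set.Icc t b := by
      ext x; simp only [mem_inter_iff, mem_Ici, mem_Ioc, mem_Icc]
      constructor
      · rintro ⟨h1, h2, h3⟩; exact ⟨h1, h3⟩
      · rintro ⟨h1, h2⟩; exact ⟨h1, ht.1.trans_le h1, h2⟩
    rw [h2, MeasureTheory.integral_Icc_eq_integral_Ioc, MeasureTheory.integral_mul_const,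
      intervalIntegral.integral_of_le ht.2]
  calc (∫ x in a..b, φ x * ∫ t in a..x, ψ t)
      = ∫ x in Set.Ioc a b, (φ x * ∫ t in a..x, ψ t) := intervalIntegral.integral_of_le hab
    _ = ∫ x, (∫ t, F x t ∂μ) ∂μ := setIntegral_congr_fun measurableSet_Ioc hL
    _ = ∫ t, (∫ x, F x t ∂μ) ∂μ := integral_integral_swap hFint
    _ = ∫ t in Set.Ioc a b, ((∫ x in t..b, φ x) * ψ t) :=
        setIntegral_congr_fun measurableSet_Ioc hR
    _ = ∫ t in a..b, (∫ x in t..b, φ x) * ψ t := (intervalIntegral.integral_of_le hab).symm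

lemma swapB (a b : ℝ) (hab : a ≤ b) (φ ψ : ℝ → ℝ)
    (hφ : IntegrableOn φ (Set.Ioc a b))
    (hψ : IntegrableOn ψ (Set.Ioc a b)) :
    (∫ x in a..b, φ x * ∫ t in x..b, ψ t) = ∫ t in a..b, (∫ x in a..t, φ x) * ψ t := by
  calc (∫ x in a..b, φ x * ∫ t in x..b, ψ t)
      = ∫ x in a..b, (∫ t in x..b, ψ t) * φ x :=
        intervalIntegral.integral_congr fun x _ => mul_comm _ _
    _ = ∫ x in a..b, ψ x * ∫ t in a..x, φ t := (swapA a b hab ψ φ hψ hφ).symm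
    _ = ∫ t in a..b, (∫ x in a..t, φ x) * ψ t :=
        intervalIntegral.integral_congr fun x _ => mul_comm _ _

/-- **Lemma 3.4 (oscillation lemma).** If `g` is a bounded measurable `q`-periodic function
on `ℝ` with zero mean over one period and `f ∈ W^{1,1}(0,H)` (written here through its
absolutely-continuous representation with derivative `f'`) vanishes at some point of `[0,H]`,
then `|∫_0^H g(x/ε) f(x) dx| ≤ 2 ε q ‖g‖_{L∞} ‖f'‖_{L¹(0,H)}`. -/
theorem stmt0
    (H q ε M : ℝ) (hH : 0 < H) (hq : 0 < q) (hε : 0 < ε)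
    (g : ℝ → ℝ) (hgmeas : Measurable g)
    (hgbd : ∀ x : ℝ, |g x| ≤ M)
    (hgper : Function.Periodic g q)
    (hgmean : (∫ x in (0:ℝ)..q, g x) = 0)
    (f f' : ℝ → ℝ)
    (hf'int : IntervalIntegrable f' volume 0 H)
    (hfAC : ∀ x ∈ Set.Icc (0:ℝ) H, f x = f 0 + ∫ t in (0:ℝ)..x, f' t)
    (hzero : ∃ x₀ ∈ Set.Icc (0:ℝ) H, f x₀ = 0) :
    |∫ x in (0:ℝ)..H, g (x / ε) * f x|
      ≤ 2 * ε * q * M * ∫ t in (0:ℝ)..H, |f' t| := by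
  obtain ⟨x₀, hx₀, hfx₀⟩ := hzero
  have hM : 0 ≤ M := le_trans (abs_nonneg _) (hgbd 0)
  set N := ∫ t in (0:ℝ)..H, |f' t| with hN
  have hN0 : 0 ≤ N :=
    intervalIntegral.integral_nonneg hH.le fun t _ => abs_nonneg _
  set φ : ℝ → ℝ := fun x => g (x / ε) with hφdef
  have hφm : Measurable φ := hgmeas.comp (measurable_id.div_const ε)
  have hφbd : ∀ x, |φ x| ≤ M := fun x => hgbd _
  have hφint : ∀ u v : ℝ, IntervalIntegrable φ volume u v :=
    fun u v => bdd_intervalIntegrable hφm hφbd u v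
  have hφon : ∀ u v : ℝ, IntegrableOn φ (Set.Ioc u v) :=
    fun u v => bdd_integrableOn hφm hφbd _ measure_Ioc_lt_top.ne
  have hgint : ∀ u v : ℝ, IntervalIntegrable g volume u v :=
    fun u v => bdd_intervalIntegrable hgmeas hgbd u v
  set G : ℝ → ℝ := fun y => ∫ s in (0:ℝ)..y, g s with hGdef
  have hGper : Function.Periodic G q := by
    intro y
    have h1 : (∫ s in y..(y + q), g s) = ∫ s in (0:ℝ)..(0 + q), g s :=
      hgper.intervalIntegral_add_eq y 0
    rw [zero_add] at h1
    have h2 := intervalIntegral.integral_add_adjacent_intervals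
      (hgint 0 y) (hgint y (y + q))
    calc G (y + q) = (∫ s in (0:ℝ)..y, g s) + ∫ s in y..(y + q), g s := h2.symm
      _ = G y := by rw [h1, hgmean, add_zero]
  have hGbd : ∀ y, |G y| ≤ q * M := by
    intro y
    obtain ⟨z, hz, hzy⟩ := hGper.exists_mem_Ico₀ hq y
    rw [hzy]
    have h1 : |G z| ≤ ∫ s in (0:ℝ)..z, |g s| :=
      intervalIntegral.abs_integral_le_integral_abs hz.1
    have h2 : (∫ s in (0:ℝ)..z, |g s|) ≤ ∫ s in (0:ℝ)..z, M :=
      intervalIntegral.integral_mono_on hz.1 (hgint 0 z).abs intervalIntegrable_const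
        (fun x _ => hgbd x)
    have h3 : (∫ s in (0:ℝ)..z, (M:ℝ)) = z * M := by
      rw [intervalIntegral.integral_const, smul_eq_mul, sub_zero]
    nlinarith [hz.1, hz.2]
  have keybd : ∀ u v : ℝ, |∫ x in u..v, φ x| ≤ 2 * ε * (q * M) := by
    intro u v
    have h1 : (∫ x in u..v, φ x) = ε • ∫ y in u / ε..v / ε, g y := by
      rw [hφdef]
      exact intervalIntegral.integral_comp_div g (ne_of_gt hε)
    have h2 : (∫ y in u / ε..v / ε, g y) = G (v / ε) - G (u / ε) :=
      (intervalIntegral.integral_interval_sub_left (hgint 0 (v / ε))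
        (hgint 0 (u / ε))).symm
    rw [h1, h2, smul_eq_mul, abs_mul, abs_of_pos hε]
    have h3 : |G (v / ε) - G (u / ε)| ≤ |G (v / ε)| + |G (u / ε)| := abs_sub _ _
    nlinarith [hGbd (v / ε), hGbd (u / ε), hε.le]
  -- the primitive of f'
  set F : ℝ → ℝ := fun x => ∫ t in x₀..x, f' t with hFdef
  have hmem0 : (0:ℝ) ∈ Set.Icc (0:ℝ) H := ⟨le_rfl, hH.le⟩
  have hmemH : H ∈ Set.Icc (0:ℝ) H := ⟨hH.le, le_rfl⟩
  have hIccsub : ∀ u v : ℝ, u ∈ Set.Icc (0:ℝ) H → v ∈ Set.Icc (0:ℝ) H →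
      IntervalIntegrable f' volume u v := by
    intro u v hu hv
    refine hf'int.mono_set ?_
    exact Set.uIcc_subset_uIcc (by rwa [Set.uIcc_of_le hH.le])
      (by rwa [Set.uIcc_of_le hH.le])
  have hf'on : ∀ u v : ℝ, u ∈ Set.Icc (0:ℝ) H → v ∈ Set.Icc (0:ℝ) H → u ≤ v →
      IntegrableOn f' (Set.Ioc u v) := by
    intro u v hu hv huv
    have := hIccsub u v hu hv
    rwa [intervalIntegrable_iff, Set.uIoc_of_le huv] at this
  have hFeq : ∀ x ∈ Set.Icc (0:ℝ) H, f x = F x := by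
    intro x hx
    have e0 : f 0 + (∫ t in (0:ℝ)..x₀, f' t) = 0 := by
      rw [← hfAC x₀ hx₀]; exact hfx₀
    have h1 := hfAC x hx
    have h2 : (∫ t in (0:ℝ)..x₀, f' t) + (∫ t in x₀..x, f' t)
        = ∫ t in (0:ℝ)..x, f' t :=
      intervalIntegral.integral_add_adjacent_intervals
        (hIccsub 0 x₀ hmem0 hx₀) (hIccsub x₀ x hx₀ hx)
    have : F x = ∫ t in x₀..x, f' t := rfl
    rw [this]; linarith
  have hFcont : ContinuousOn F (Set.Icc (0:ℝ) H) := by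
    have h := intervalIntegral.continuousOn_primitive_interval' (a := x₀) hf'int
      (by rw [Set.uIcc_of_le hH.le]; exact hx₀)
    rwa [Set.uIcc_of_le hH.le] at h
  have hFbd : ∀ x ∈ Set.Icc (0:ℝ) H, |F x| ≤ N := by
    intro x hx
    have h1 : ‖∫ t in x₀..x, f' t‖ ≤ ∫ t in Set.uIoc x₀ x, ‖f' t‖ :=
      intervalIntegral.norm_integral_le_integral_norm_uIoc
    have hsub : Set.uIoc x₀ x ⊆ Set.Ioc 0 H := by
      rw [Set.uIoc]
      exact Set.Ioc_subset_Ioc (le_min hx₀.1 hx.1) (max_le hx₀.2 hx.2)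
    have hnormint : IntegrableOn (fun t => ‖f' t‖) (Set.Ioc 0 H) := by
      have := hf'int.norm
      rwa [intervalIntegrable_iff, Set.uIoc_of_le hH.le] at this
    have h2 : (∫ t in Set.uIoc x₀ x, ‖f' t‖) ≤ ∫ t in Set.Ioc 0 H, ‖f' t‖ :=
      setIntegral_mono_set hnormint (ae_of_all _ fun t => norm_nonneg _)
        hsub.eventuallyLE
    have h3 : (∫ t in Set.Ioc 0 H, ‖f' t‖) = N := by
      rw [hN, intervalIntegral.integral_of_le hH.le]
      simp [Real.norm_eq_abs]
    calc |F x| = ‖∫ t in x₀..x, f' t‖ := (Real.norm_eq_abs _).symm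
      _ ≤ ∫ t in Set.uIoc x₀ x, ‖f' t‖ := h1
      _ ≤ N := h3 ▸ h2
  have hIntOn : ∀ u v : ℝ, u ∈ Set.Icc (0:ℝ) H → v ∈ Set.Icc (0:ℝ) H → u ≤ v →
      IntervalIntegrable (fun x => φ x * F x) volume u v := by
    intro u v hu hv huv
    rw [intervalIntegrable_iff, Set.uIoc_of_le huv]
    have hsub : Set.Ioc u v ⊆ Set.Icc (0:ℝ) H :=
      fun x hx => ⟨hu.1.trans hx.1.le, hx.2.trans hv.2⟩
    refine Integrable.mono' (g := fun _ => M * N)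
      (integrableOn_const measure_Ioc_lt_top.ne) ?_ ?_
    · exact (hφm.aestronglyMeasurable.restrict).mul
        (((hFcont.mono hsub).aestronglyMeasurable measurableSet_Ioc))
    · rw [ae_restrict_iff' measurableSet_Ioc]
      refine ae_of_all _ fun x hx => ?_
      have hx' := hsub hx
      rw [Real.norm_eq_abs, abs_mul]
      exact mul_le_mul (hφbd x) (hFbd x hx') (abs_nonneg _) hM
  -- rewrite the integrand
  have hcongr : (∫ x in (0:ℝ)..H, g (x / ε) * f x) = ∫ x in (0:ℝ)..H, φ x * F x := by
    refine intervalIntegral.integral_congr fun x hx => ?_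
    rw [Set.uIcc_of_le hH.le] at hx
    rw [hFeq x hx]
  have hsplit : (∫ x in (0:ℝ)..x₀, φ x * F x) + (∫ x in x₀..H, φ x * F x)
      = ∫ x in (0:ℝ)..H, φ x * F x :=
    intervalIntegral.integral_add_adjacent_intervals
      (hIntOn 0 x₀ hmem0 hx₀ hx₀.1) (hIntOn x₀ H hx₀ hmemH hx₀.2)
  -- estimate the right piece
  have hI2 : (∫ x in x₀..H, φ x * F x)
      = ∫ t in x₀..H, (∫ x in t..H, φ x) * f' t :=
    swapA x₀ H hx₀.2 φ f' (hφon _ _) (hf'on x₀ H hx₀ hmemH hx₀.2)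
  -- estimate the left piece
  have hI1 : (∫ x in (0:ℝ)..x₀, φ x * F x)
      = - ∫ t in (0:ℝ)..x₀, (∫ x in (0:ℝ)..t, φ x) * f' t := by
    have e1 : (∫ x in (0:ℝ)..x₀, φ x * F x)
        = ∫ x in (0:ℝ)..x₀, φ x * (-(∫ t in x..x₀, f' t)) := by
      refine intervalIntegral.integral_congr fun x hx => ?_
      show φ x * (∫ t in x₀..x, f' t) = _
      rw [intervalIntegral.integral_symm x x₀]
    rw [e1]
    have e2 : (∫ x in (0:ℝ)..x₀, φ x * (-(∫ t in x..x₀, f' t)))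
        = - ∫ x in (0:ℝ)..x₀, φ x * (∫ t in x..x₀, f' t) := by
      rw [← intervalIntegral.integral_neg]
      refine intervalIntegral.integral_congr fun x hx => ?_
      ring
    rw [e2, swapB 0 x₀ hx₀.1 φ f' (hφon _ _) (hf'on 0 x₀ hmem0 hx₀ hx₀.1)]
  -- bounds
  have habs : ∀ (a b : ℝ), a ∈ Set.Icc (0:ℝ) H → b ∈ Set.Icc (0:ℝ) H → a ≤ b →
      ∀ Φ : ℝ → ℝ, (∀ t, |Φ t| ≤ 2 * ε * (q * M)) →
      |∫ t in a..b, Φ t * f' t| ≤ 2 * ε * (q * M) * ∫ t in a..b, |f' t| := by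
    intro a b ha hb hab Φ hΦ
    set ψ : ℝ → ℝ := fun t => 2 * ε * (q * M) * |f' t| with hψdef
    have h1 : ‖∫ t in a..b, Φ t * f' t‖ ≤ |∫ t in a..b, ψ t| := by
      refine intervalIntegral.norm_integral_le_abs_of_norm_le ?_ ?_
      · refine ae_of_all _ fun t => ?_
        rw [Real.norm_eq_abs, abs_mul]
        exact mul_le_mul_of_nonneg_right (hΦ t) (abs_nonneg _)
      · exact ((hIccsub a b ha hb).abs).const_mul _
    have h2 : (∫ t in a..b, ψ t)
        = 2 * ε * (q * M) * ∫ t in a..b, |f' t| := by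
      rw [hψdef, ← intervalIntegral.integral_const_mul]
    have h3 : 0 ≤ ∫ t in a..b, |f' t| :=
      intervalIntegral.integral_nonneg hab fun t _ => abs_nonneg _
    rw [Real.norm_eq_abs] at h1
    rw [h2] at h1
    rwa [abs_of_nonneg (mul_nonneg (by positivity) h3)] at h1
  have hb1 : |∫ t in (0:ℝ)..x₀, (∫ x in (0:ℝ)..t, φ x) * f' t|
      ≤ 2 * ε * (q * M) * ∫ t in (0:ℝ)..x₀, |f' t| :=
    habs 0 x₀ hmem0 hx₀ hx₀.1 _ fun t => keybd 0 t
  have hb2 : |∫ t in x₀..H, (∫ x in t..H, φ x) * f' t|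
      ≤ 2 * ε * (q * M) * ∫ t in x₀..H, |f' t| :=
    habs x₀ H hx₀ hmemH hx₀.2 _ fun t => keybd t H
  have hNsplit : (∫ t in (0:ℝ)..x₀, |f' t|) + (∫ t in x₀..H, |f' t|) = N := by
    rw [hN]
    exact intervalIntegral.integral_add_adjacent_intervals
      ((hIccsub 0 x₀ hmem0 hx₀).abs) ((hIccsub x₀ H hx₀ hmemH).abs)
  rw [hcongr, ← hsplit, hI1, hI2]
  have := abs_add_le (-(∫ t in (0:ℝ)..x₀, (∫ x in (0:ℝ)..t, φ x) * f' t))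
    (∫ t in x₀..H, (∫ x in t..H, φ x) * f' t)
  rw [abs_neg] at this
  calc |(- ∫ t in (0:ℝ)..x₀, (∫ x in (0:ℝ)..t, φ x) * f' t)
        + ∫ t in x₀..H, (∫ x in t..H, φ x) * f' t|
      ≤ |∫ t in (0:ℝ)..x₀, (∫ x in (0:ℝ)..t, φ x) * f' t|
        + |∫ t in x₀..H, (∫ x in t..H, φ x) * f' t| := this
    _ ≤ 2 * ε * (q * M) * ((∫ t in (0:ℝ)..x₀, |f' t|) + ∫ t in x₀..H, |f' t|) := by
        rw [mul_add]; exact add_le_add hb1 hb2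
    _ = 2 * ε * q * M * N := by rw [hNsplit]; ring
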